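/- Assume N ≥ 1, and let S be an arbitrary invertible 2×2 complex matrix. Then (i) an element ω ∈ Ω satisfies dω = 0 if and only if ω ∼ a + Σ_α ξ₁^α a_α + (Σ_{α,β} ξ₁^α ξ₁^β (ΓC⁻¹)_{αβ}) b for some polynomials a, a_α, b lying in the subring ℂ[ψ₂,…,ψ_N, χ₂,…,χ_N] of R (complex constants when N = 1); and (ii) such a combination is ∼ 0 if and only if a = a₁ = a₂ = b = 0. -/

import Mathlib

/-!
D = 2, signature (1,1) supersymmetry algebra cohomology.
`R2 Np Nm = ℂ[ψ₁,…,ψ_{N₊}, χ₁,…,χ_{N₋}]`, `Om2` is the free module with basis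
`{1, c̃₁, c̃₂, c̃₁c̃₂}`, and `d2` is the differential with `dc̃₁ = P`, `dc̃₂ = Q`.
-/

open MvPolynomial

noncomputable section

/-- The polynomial ring `ℂ[ψ₁,…,ψ_{N₊}, χ₁,…,χ_{N₋}]`; `Sum.inl i ↦ ψᵢ`, `Sum.inr i ↦ χᵢ`. -/
abbrev R2 (Np Nm : ℕ) : Type := MvPolynomial (Fin Np ⊕ Fin Nm) ℂ

/-- `Ω`: free `R2`-module with basis `{1, c̃₁, c̃₂, c̃₁c̃₂}` (components 0,1,2,3). -/
abbrev Om2 (Np Nm : ℕ) : Type := Fin 4 → R2 Np Nm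

/-- The ghost `ψᵢ`. -/
def ψ {Np Nm : ℕ} (i : Fin Np) : R2 Np Nm := X (Sum.inl i)

/-- The ghost `χᵢ`. -/
def χ {Np Nm : ℕ} (i : Fin Nm) : R2 Np Nm := X (Sum.inr i)

/-- `P = Σ ψᵢ²`. -/
def Pp (Np Nm : ℕ) : R2 Np Nm := ∑ i, ψ i ^ 2

/-- `Q = Σ χᵢ²`. -/
def Qq (Np Nm : ℕ) : R2 Np Nm := ∑ i, χ i ^ 2

/-- The differential `d(ω₀ + c̃₁ω₁ + c̃₂ω₂ + c̃₁c̃₂ω₃) = Pω₁ + Qω₂ + (Pc̃₂ − Qc̃₁)ω₃`. -/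
def d2 {Np Nm : ℕ} (ω : Om2 Np Nm) : Om2 Np Nm :=
  ![Pp Np Nm * ω 1 + Qq Np Nm * ω 2, -(Qq Np Nm * ω 3), Pp Np Nm * ω 3, 0]

/-- Embedding of `R` into `Ω` (coefficient of the basis element `1`). -/
def ofR {Np Nm : ℕ} (r : R2 Np Nm) : Om2 Np Nm := ![r, 0, 0, 0]

/-- `ω ∼ ω'` iff `ω − ω' = dρ` for some `ρ`. -/
def Equiv2 {Np Nm : ℕ} (ω ω' : Om2 Np Nm) : Prop := ∃ ρ, ω - ω' = d2 ρ


/-- The subring `ℂ[ψ₂,…,ψ_N, χ₂,…,χ_N]` of `R2 N N`. -/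
def coefRingN (N : ℕ) (hN : 0 < N) : Subalgebra ℂ (R2 N N) :=
  MvPolynomial.supported ℂ
    {v : Fin N ⊕ Fin N | v ≠ Sum.inl ⟨0, hN⟩ ∧ v ≠ Sum.inr ⟨0, hN⟩}

/-- Pauli matrix σ₂. -/
def sigma2 : Matrix (Fin 2) (Fin 2) ℂ := !![0, -Complex.I; Complex.I, 0]

/-- Pauli matrix σ₃. -/
def sigma3 : Matrix (Fin 2) (Fin 2) ℂ := !![1, 0; 0, -1]

/-- Chirality matrix `Γ = S σ₃ S⁻¹`. -/
def Gam (S : Matrix (Fin 2) (Fin 2) ℂ) : Matrix (Fin 2) (Fin 2) ℂ := S * sigma3 * S⁻¹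

/-- Charge conjugation matrix `C = (Sᵀ)⁻¹ σ₂ S⁻¹`. -/
def Cmat (S : Matrix (Fin 2) (Fin 2) ℂ) : Matrix (Fin 2) (Fin 2) ℂ :=
  (S.transpose)⁻¹ * sigma2 * S⁻¹

/-- The Majorana supersymmetry ghost `ξᵢ = (ψᵢ, χᵢ)·S⁻¹`. -/
def xi {N : ℕ} (S : Matrix (Fin 2) (Fin 2) ℂ) (i : Fin N) (α : Fin 2) : R2 N N :=
  C (S⁻¹ 0 α) * ψ i + C (S⁻¹ 1 α) * χ i

-- helper: in AdjoinRoot of monic quadratic, {1, root} independent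
lemma quad_nontrivial {R : Type*} [CommRing R] [Nontrivial R] (c : R) :
    Nontrivial (AdjoinRoot (Polynomial.X^2 + Polynomial.C c)) := by
  have hm : (Polynomial.X^2 + Polynomial.C c).Monic := by
    exact Polynomial.monic_X_pow_add_C c (by norm_num)
  set pb := AdjoinRoot.powerBasis' hm with hpb
  have hdim : pb.dim = 2 := by
    rw [hpb, AdjoinRoot.powerBasis'_dim, Polynomial.natDegree_X_pow_add_C]
  have h0 : pb.basis ⟨0, by omega⟩ ≠ 0 := pb.basis.ne_zero _
  exact ⟨_, 0, h0⟩

lemma quad_helper {R : Type*} [CommRing R] [Nontrivial R] (c b0 b1 : R)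
    (h : AdjoinRoot.of (Polynomial.X^2 + Polynomial.C c) b0
       + AdjoinRoot.of (Polynomial.X^2 + Polynomial.C c) b1
         * AdjoinRoot.root (Polynomial.X^2 + Polynomial.C c) = 0) :
    b0 = 0 ∧ b1 = 0 := by
  have hm : (Polynomial.X^2 + Polynomial.C c).Monic := by
    exact Polynomial.monic_X_pow_add_C c (by norm_num)
  set pb := AdjoinRoot.powerBasis' hm with hpb
  have hdim : pb.dim = 2 := by
    rw [hpb, AdjoinRoot.powerBasis'_dim, Polynomial.natDegree_X_pow_add_C]
  let b2 := pb.basis.reindex (finCongr hdim)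
  have hb2 : ∀ i : Fin 2, b2 i = pb.gen ^ (i : ℕ) := by
    intro i
    rw [Module.Basis.reindex_apply, pb.basis_eq_pow]
    simp
  have hli := Fintype.linearIndependent_iff.mp b2.linearIndependent ![b0, b1]
  have hsum : ∑ i : Fin 2, (![b0, b1] i) • b2 i = 0 := by
    rw [Fin.sum_univ_two, hb2 0, hb2 1]
    have hg : pb.gen = AdjoinRoot.root _ := by simp [pb]
    have hof : ∀ x : R, (AdjoinRoot.of (Polynomial.X^2 + Polynomial.C c)) x
        = algebraMap R (AdjoinRoot (Polynomial.X^2 + Polynomial.C c)) x := fun x => rfl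
    simp only [Matrix.cons_val_zero, Matrix.cons_val_one, Matrix.head_cons, Fin.isValue,
      Fin.val_zero, Fin.val_one, pow_zero, pow_one, hg]
    rw [Algebra.smul_def, Algebra.smul_def, mul_one, ← hof, ← hof]
    exact h
  have := hli hsum
  exact ⟨by simpa using this 0, by simpa using this 1⟩


-- divisibility by a monic quadratic in one variable
lemma poly_dvd_aux {E : Type*} [CommRing E] [IsDomain E] (c q : E) (hc : c ≠ 0)
    (x y : Polynomial E)
    (h : Polynomial.C c * x = (Polynomial.X^2 + Polynomial.C q) * y) :
    (Polynomial.X^2 + Polynomial.C q) ∣ x := by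
  set g : Polynomial E := Polynomial.X^2 + Polynomial.C q with hgdef
  have hm : g.Monic := Polynomial.monic_X_pow_add_C q (by norm_num)
  have hdiv := Polynomial.modByMonic_add_div x g
  -- x = x %ₘ g + g * (x /ₘ g)
  have key : Polynomial.C c * (x %ₘ g) = g * (y - Polynomial.C c * (x /ₘ g)) := by
    linear_combination h + Polynomial.C c * hdiv
  have hw : y - Polynomial.C c * (x /ₘ g) = 0 := by
    by_contra hw
    have hdeg1 : (Polynomial.C c * (x %ₘ g)).degree < g.degree := by
      calc (Polynomial.C c * (x %ₘ g)).degree ≤ (x %ₘ g).degree := by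
            rcases eq_or_ne (x %ₘ g) 0 with h0 | h0
            · simp [h0]
            · rw [Polynomial.degree_mul, Polynomial.degree_C hc]; simp
        _ < g.degree := Polynomial.degree_modByMonic_lt x hm
    rw [key] at hdeg1
    have := Polynomial.degree_mul (p := g) (q := y - Polynomial.C c * (x /ₘ g))
    rw [this] at hdeg1
    have hg0 : g.degree ≠ ⊥ := by
      rw [Polynomial.degree_eq_natDegree hm.ne_zero]; simp
    have hw0 : (y - Polynomial.C c * (x /ₘ g)).degree ≥ 0 := Polynomial.zero_le_degree_iff.mpr hw
    have : g.degree ≤ g.degree + (y - Polynomial.C c * (x /ₘ g)).degree := le_add_of_nonneg_right hw0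
    exact absurd (lt_of_le_of_lt this hdeg1) (lt_irrefl _)
  have hrem : x %ₘ g = 0 := by
    have : Polynomial.C c * (x %ₘ g) = 0 := by rw [key, hw, mul_zero]
    rcases mul_eq_zero.mp this with h0 | h0
    · exact absurd (Polynomial.C_eq_zero.mp h0) hc
    · exact h0
  exact ⟨x /ₘ g, by linear_combination hrem - hdiv⟩

lemma hs2 : sigma2 * sigma2 = 1 := by
  ext i j
  fin_cases i <;> fin_cases j <;>
    simp [sigma2, Matrix.mul_apply, Fin.sum_univ_two, Complex.I_mul_I]

lemma hCinv (S : Matrix (Fin 2) (Fin 2) ℂ) (hS : IsUnit S.det) : (Cmat S)⁻¹ = S * sigma2 * S.transpose := by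
  have hs2inv : sigma2⁻¹ = sigma2 := Matrix.inv_eq_right_inv (hs2)
  have hTdet : IsUnit S.transpose.det := by rwa [Matrix.det_transpose]
  rw [Cmat, Matrix.mul_inv_rev, Matrix.mul_inv_rev, hs2inv,
    Matrix.nonsing_inv_nonsing_inv _ hS, Matrix.nonsing_inv_nonsing_inv _ hTdet,
    Matrix.mul_assoc]

lemma hKmat (S : Matrix (Fin 2) (Fin 2) ℂ) (hS : IsUnit S.det) : S⁻¹ * (Gam S * (Cmat S)⁻¹) * (S⁻¹).transpose
    = !![0, -Complex.I; -Complex.I, 0] := by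
  have hTdet : IsUnit S.transpose.det := by rwa [Matrix.det_transpose]
  rw [hCinv S hS, Gam, Matrix.transpose_nonsing_inv]
  calc S⁻¹ * (S * sigma3 * S⁻¹ * (S * sigma2 * S.transpose)) * S.transpose⁻¹
      = (S⁻¹ * S) * sigma3 * (S⁻¹ * S) * sigma2 * (S.transpose * S.transpose⁻¹) := by
        simp only [Matrix.mul_assoc]
    _ = sigma3 * sigma2 := by
        rw [Matrix.nonsing_inv_mul _ hS, Matrix.mul_nonsing_inv _ hTdet]
        simp [Matrix.mul_assoc]
    _ = !![0, -Complex.I; -Complex.I, 0] := by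
        ext i j
        fin_cases i <;> fin_cases j <;>
          simp [sigma2, sigma3, Matrix.mul_apply, Fin.sum_univ_two]


lemma quadxi {N : ℕ} (S : Matrix (Fin 2) (Fin 2) ℂ) (hS : IsUnit S.det) (i : Fin N) :
    (∑ α, ∑ β, xi S i α * xi S i β * C ((Gam S * (Cmat S)⁻¹) α β) : R2 N N)
      = C (-2*Complex.I) * (ψ i * χ i) := by
  have hK := hKmat S hS
  have hE : ∀ a b : Fin 2,
      S⁻¹ a 0 * ((Gam S * (Cmat S)⁻¹) 0 0) * S⁻¹ b 0
    + S⁻¹ a 0 * ((Gam S * (Cmat S)⁻¹) 0 1) * S⁻¹ b 1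
    + S⁻¹ a 1 * ((Gam S * (Cmat S)⁻¹) 1 0) * S⁻¹ b 0
    + S⁻¹ a 1 * ((Gam S * (Cmat S)⁻¹) 1 1) * S⁻¹ b 1
      = !![(0:ℂ), -Complex.I; -Complex.I, 0] a b := by
    intro a b
    rw [← hK]
    simp only [Matrix.mul_apply, Fin.sum_univ_two, Matrix.transpose_apply]
    ring
  have hC : ∀ a b : Fin 2,
      (C (S⁻¹ a 0) * C ((Gam S * (Cmat S)⁻¹) 0 0) * C (S⁻¹ b 0)
    + C (S⁻¹ a 0) * C ((Gam S * (Cmat S)⁻¹) 0 1) * C (S⁻¹ b 1)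
    + C (S⁻¹ a 1) * C ((Gam S * (Cmat S)⁻¹) 1 0) * C (S⁻¹ b 0)
    + C (S⁻¹ a 1) * C ((Gam S * (Cmat S)⁻¹) 1 1) * C (S⁻¹ b 1) : R2 N N)
      = C (!![(0:ℂ), -Complex.I; -Complex.I, 0] a b) := by
    intro a b
    rw [← map_mul, ← map_mul, ← map_mul, ← map_mul, ← map_mul, ← map_mul, ← map_mul,
      ← map_mul, ← map_add, ← map_add, ← map_add, hE]
  have hC00 := hC 0 0
  have hC01 := hC 0 1
  have hC10 := hC 1 0
  have hC11 := hC 1 1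
  simp only [Matrix.of_apply, Matrix.cons_val_zero, Matrix.cons_val_one, Matrix.head_cons,
    Matrix.head_fin_const, map_zero, map_neg] at hC00 hC01 hC10 hC11
  simp only [Fin.sum_univ_two, xi]
  have hI : (C (-2*Complex.I) : R2 N N) = -2 * C Complex.I := by
    rw [map_mul, map_neg, map_ofNat]
  rw [hI]
  linear_combination (ψ i * ψ i) * hC00 + (ψ i * χ i) * hC01 + (χ i * ψ i) * hC10
    + (χ i * χ i) * hC11

lemma linxi {N : ℕ} (S : Matrix (Fin 2) (Fin 2) ℂ) (i : Fin N) (aa : Fin 2 → R2 N N) :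
    (∑ α, xi S i α * aa α : R2 N N)
      = ψ i * (C (S⁻¹ 0 0) * aa 0 + C (S⁻¹ 0 1) * aa 1)
      + χ i * (C (S⁻¹ 1 0) * aa 0 + C (S⁻¹ 1 1) * aa 1) := by
  simp only [Fin.sum_univ_two, xi]
  ring

lemma recov {N : ℕ} (S : Matrix (Fin 2) (Fin 2) ℂ) (hS : IsUnit S.det)
    (aa : Fin 2 → R2 N N) (α : Fin 2) :
    C (S α 0) * (C (S⁻¹ 0 0) * aa 0 + C (S⁻¹ 0 1) * aa 1)
      + C (S α 1) * (C (S⁻¹ 1 0) * aa 0 + C (S⁻¹ 1 1) * aa 1) = aa α := by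
  have h1 : S * S⁻¹ = 1 := Matrix.mul_nonsing_inv S hS
  have hE : ∀ a b : Fin 2, S a 0 * S⁻¹ 0 b + S a 1 * S⁻¹ 1 b
      = (1 : Matrix (Fin 2) (Fin 2) ℂ) a b := by
    intro a b
    rw [← h1]
    simp [Matrix.mul_apply, Fin.sum_univ_two]
  have hCE : ∀ a b : Fin 2, (C (S a 0) * C (S⁻¹ 0 b) + C (S a 1) * C (S⁻¹ 1 b) : R2 N N)
      = C ((1 : Matrix (Fin 2) (Fin 2) ℂ) a b) := by
    intro a b
    rw [← map_mul, ← map_mul, ← map_add, hE]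
  have e0 := hCE α 0
  have e1 := hCE α 1
  fin_cases α <;>
  · simp only [Fin.zero_eta, Fin.mk_one]
    norm_num [Matrix.one_apply] at e0 e1
    linear_combination aa 0 * e0 + aa 1 * e1


lemma recov2 {N : ℕ} (S : Matrix (Fin 2) (Fin 2) ℂ) (hS : IsUnit S.det)
    (b1 b2 : R2 N N) :
    (C (S⁻¹ 0 0) * (C (S 0 0) * b1 + C (S 0 1) * b2)
      + C (S⁻¹ 0 1) * (C (S 1 0) * b1 + C (S 1 1) * b2) = b1)
    ∧ (C (S⁻¹ 1 0) * (C (S 0 0) * b1 + C (S 0 1) * b2)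
      + C (S⁻¹ 1 1) * (C (S 1 0) * b1 + C (S 1 1) * b2) = b2) := by
  have h1 : S⁻¹ * S = 1 := Matrix.nonsing_inv_mul S hS
  have hE : ∀ a b : Fin 2, S⁻¹ a 0 * S 0 b + S⁻¹ a 1 * S 1 b
      = (1 : Matrix (Fin 2) (Fin 2) ℂ) a b := by
    intro a b
    rw [← h1]
    simp [Matrix.mul_apply, Fin.sum_univ_two]
  have hCE : ∀ a b : Fin 2, (C (S⁻¹ a 0) * C (S 0 b) + C (S⁻¹ a 1) * C (S 1 b) : R2 N N)
      = C ((1 : Matrix (Fin 2) (Fin 2) ℂ) a b) := by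
    intro a b
    rw [← map_mul, ← map_mul, ← map_add, hE]
  have e00 := hCE 0 0
  have e01 := hCE 0 1
  have e10 := hCE 1 0
  have e11 := hCE 1 1
  norm_num [Matrix.one_apply] at e00 e01 e10 e11
  constructor
  · linear_combination b1 * e00 + b2 * e01
  · linear_combination b1 * e10 + b2 * e11

lemma vec4_0 {α : Type*} (a b c d : α) : ![a,b,c,d] 0 = a := rfl
lemma vec4_1 {α : Type*} (a b c d : α) : ![a,b,c,d] 1 = b := rfl
lemma vec4_2 {α : Type*} (a b c d : α) : ![a,b,c,d] 2 = c := rfl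
lemma vec4_3 {α : Type*} (a b c d : α) : ![a,b,c,d] 3 = d := rfl

namespace Stmt5aux
variable (N : ℕ) (hN : 0 < N)

def iz : Fin N := ⟨0, hN⟩

lemma Pp_ne_zero (hN : 0 < N) : Pp N N ≠ 0 := by
  intro h
  have := congrArg (MvPolynomial.eval (fun _ => (1:ℂ))) h
  simp [Pp, ψ] at this
  exact absurd this (by exact_mod_cast hN.ne')

lemma Qq_ne_zero (hN : 0 < N) : Qq N N ≠ 0 := by
  intro h
  have := congrArg (MvPolynomial.eval (fun _ => (1:ℂ))) h
  simp [Qq, χ] at this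
  exact absurd this (by exact_mod_cast hN.ne')

def Φχ : R2 N N ≃ₐ[ℂ]
    Polynomial (MvPolynomial {v : Fin N ⊕ Fin N // v ≠ Sum.inr (iz N hN)} ℂ) :=
  (MvPolynomial.renameEquiv ℂ (Equiv.optionSubtypeNe (Sum.inr (iz N hN))).symm).trans
    (MvPolynomial.optionEquivLeft ℂ _)

lemma Φχ_X_inr : Φχ N hN (χ (iz N hN)) = Polynomial.X := by
  rw [Φχ]
  simp only [χ, AlgEquiv.trans_apply, renameEquiv_apply, rename_X,
    Equiv.optionSubtypeNe_symm_self]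
  exact optionEquivLeft_X_none ℂ _

lemma Φχ_X_ne (v : Fin N ⊕ Fin N) (h : v ≠ Sum.inr (iz N hN)) :
    Φχ N hN (X v) = Polynomial.C (X ⟨v, h⟩) := by
  rw [Φχ]
  simp only [AlgEquiv.trans_apply, renameEquiv_apply, rename_X,
    Equiv.optionSubtypeNe_symm_of_ne h]
  exact optionEquivLeft_X_some ℂ _ _

lemma Φχ_P : ∃ c : MvPolynomial {v : Fin N ⊕ Fin N // v ≠ Sum.inr (iz N hN)} ℂ,
    c ≠ 0 ∧ Φχ N hN (Pp N N) = Polynomial.C c := by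
  have h2 : Φχ N hN (Pp N N) ∈ (Polynomial.C :
      MvPolynomial {v : Fin N ⊕ Fin N // v ≠ Sum.inr (iz N hN)} ℂ →+* _).range := by
    rw [Pp, map_sum]
    apply Subring.sum_mem
    intro i _
    rw [map_pow, ψ, Φχ_X_ne N hN _ (by simp)]
    exact pow_mem (RingHom.mem_range_self _ _) 2
  obtain ⟨c, hc⟩ := h2
  refine ⟨c, ?_, hc.symm⟩
  intro h0
  rw [h0, map_zero] at hc
  exact Pp_ne_zero N hN ((map_eq_zero_iff _ (Φχ N hN).injective).mp hc.symm)

lemma Φχ_Q : ∃ q : MvPolynomial {v : Fin N ⊕ Fin N // v ≠ Sum.inr (iz N hN)} ℂ,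
    Φχ N hN (Qq N N) = Polynomial.X^2 + Polynomial.C q := by
  have h1 : Qq N N = χ (iz N hN)^2 + ∑ i ∈ Finset.univ.erase (iz N hN), χ i^2 :=
    (Finset.add_sum_erase _ _ (Finset.mem_univ _)).symm
  have h2 : Φχ N hN (∑ i ∈ Finset.univ.erase (iz N hN), χ i^2) ∈ (Polynomial.C :
      MvPolynomial {v : Fin N ⊕ Fin N // v ≠ Sum.inr (iz N hN)} ℂ →+* _).range := by
    rw [map_sum]
    apply Subring.sum_mem
    intro i hi
    have hne : (Sum.inr i : Fin N ⊕ Fin N) ≠ Sum.inr (iz N hN) := by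
      simpa using (Finset.mem_erase.mp hi).1
    rw [map_pow, χ, Φχ_X_ne N hN _ hne]
    exact pow_mem (RingHom.mem_range_self _ _) 2
  obtain ⟨q, hq⟩ := h2
  refine ⟨q, ?_⟩
  rw [h1, map_add, map_pow, Φχ_X_inr, ← hq]

lemma Qdvd (hN : 0 < N) (x y : R2 N N) (h : Pp N N * x = Qq N N * y) : Qq N N ∣ x := by
  obtain ⟨c, hc, hP⟩ := Φχ_P N hN
  obtain ⟨q, hQ⟩ := Φχ_Q N hN
  have h2 : Polynomial.C c * (Φχ N hN x) = (Polynomial.X^2 + Polynomial.C q) * (Φχ N hN y) := by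
    rw [← hP, ← hQ, ← map_mul, ← map_mul, h]
  obtain ⟨k, hk⟩ := poly_dvd_aux c q hc _ _ h2
  refine ⟨(Φχ N hN).symm k, ?_⟩
  apply (Φχ N hN).injective
  rw [map_mul, hQ, AlgEquiv.apply_symm_apply, hk]

lemma cancelQ (hN : 0 < N) (x y : R2 N N) (h : Qq N N * x = Qq N N * y) : x = y :=
  mul_left_cancel₀ (Qq_ne_zero N hN) h

lemma L3 (hN : 0 < N) (x y : R2 N N) (h : Pp N N * x + Qq N N * y = 0) :
    ∃ t, x = Qq N N * t ∧ y = -(Pp N N * t) := by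
  obtain ⟨t, ht⟩ := Qdvd N hN x (-y) (by linear_combination h)
  refine ⟨t, ht, ?_⟩
  have : Qq N N * y = Qq N N * (-(Pp N N * t)) := by
    rw [ht] at h; linear_combination h
  exact cancelQ N hN _ _ this

def Kv : Set (Fin N ⊕ Fin N) := {v | v ≠ Sum.inl (iz N hN) ∧ v ≠ Sum.inr (iz N hN)}

def pR : R2 N N := ∑ i ∈ Finset.univ.erase (iz N hN), ψ i ^ 2
def qR : R2 N N := ∑ i ∈ Finset.univ.erase (iz N hN), χ i ^ 2

lemma hPsplit : Pp N N = ψ (iz N hN)^2 + pR N hN :=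
  (Finset.add_sum_erase _ _ (Finset.mem_univ _)).symm

lemma hQsplit : Qq N N = χ (iz N hN)^2 + qR N hN :=
  (Finset.add_sum_erase _ _ (Finset.mem_univ _)).symm

lemma memX (v : Fin N ⊕ Fin N) (h1 : v ≠ Sum.inl (iz N hN)) (h2 : v ≠ Sum.inr (iz N hN)) :
    X v ∈ MvPolynomial.supported ℂ (Kv N hN) :=
  MvPolynomial.X_mem_supported.mpr ⟨h1, h2⟩

lemma mempR : pR N hN ∈ MvPolynomial.supported ℂ (Kv N hN) := by
  apply Subalgebra.sum_mem
  intro i hi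
  exact pow_mem (memX N hN _ (by simpa using (Finset.mem_erase.mp hi).1) (by simp)) 2

lemma memqR : qR N hN ∈ MvPolynomial.supported ℂ (Kv N hN) := by
  apply Subalgebra.sum_mem
  intro i hi
  exact pow_mem (memX N hN _ (by simp) (by simpa using (Finset.mem_erase.mp hi).1)) 2

lemma memC (z : ℂ) : (C z : R2 N N) ∈ MvPolynomial.supported ℂ (Kv N hN) := by
  rw [← MvPolynomial.algebraMap_eq]
  exact Subalgebra.algebraMap_mem _ z

lemma L1 (hN : 0 < N) (r : R2 N N) : ∃ a a1 a2 a3 u v : R2 N N,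
    a ∈ MvPolynomial.supported ℂ (Kv N hN) ∧ a1 ∈ MvPolynomial.supported ℂ (Kv N hN) ∧
    a2 ∈ MvPolynomial.supported ℂ (Kv N hN) ∧ a3 ∈ MvPolynomial.supported ℂ (Kv N hN) ∧
    r = a + ψ (iz N hN) * a1 + χ (iz N hN) * a2 + ψ (iz N hN) * χ (iz N hN) * a3
      + Pp N N * u + Qq N N * v := by
  induction r using MvPolynomial.induction_on with
  | C z => exact ⟨C z, 0, 0, 0, 0, 0, memC N hN z, Subalgebra.zero_mem _,
      Subalgebra.zero_mem _, Subalgebra.zero_mem _, by ring⟩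
  | add p q hp hq =>
    obtain ⟨a, a1, a2, a3, u, v, m0, m1, m2, m3, he⟩ := hp
    obtain ⟨a', a1', a2', a3', u', v', m0', m1', m2', m3', he'⟩ := hq
    exact ⟨a + a', a1 + a1', a2 + a2', a3 + a3', u + u', v + v',
      add_mem m0 m0', add_mem m1 m1', add_mem m2 m2', add_mem m3 m3',
      by rw [he, he']; ring⟩
  | mul_X p w hp =>
    obtain ⟨a, a1, a2, a3, u, v, m0, m1, m2, m3, he⟩ := hp
    by_cases h1 : w = Sum.inl (iz N hN)
    · subst h1
      refine ⟨-(pR N hN * a1), a, -(pR N hN * a3), a2,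
        u * ψ (iz N hN) + a1 + χ (iz N hN) * a3, v * ψ (iz N hN),
        neg_mem (mul_mem (mempR N hN) m1), m0, neg_mem (mul_mem (mempR N hN) m3), m2, ?_⟩
      have hXψ : (X (Sum.inl (iz N hN)) : R2 N N) = ψ (iz N hN) := rfl
      rw [hXψ, he, hPsplit N hN]
      ring
    · by_cases h2 : w = Sum.inr (iz N hN)
      · subst h2
        refine ⟨-(qR N hN * a2), -(qR N hN * a3), a, a1,
          u * χ (iz N hN), v * χ (iz N hN) + a2 + ψ (iz N hN) * a3,
          neg_mem (mul_mem (memqR N hN) m2), neg_mem (mul_mem (memqR N hN) m3), m0, m1, ?_⟩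
        have hXχ : (X (Sum.inr (iz N hN)) : R2 N N) = χ (iz N hN) := rfl
        rw [hXχ, he, hQsplit N hN]
        ring
      · refine ⟨a * X w, a1 * X w, a2 * X w, a3 * X w, u * X w, v * X w,
          mul_mem m0 (memX N hN w h1 h2), mul_mem m1 (memX N hN w h1 h2),
          mul_mem m2 (memX N hN w h1 h2), mul_mem m3 (memX N hN w h1 h2), ?_⟩
        rw [he]
        ring

lemma L2 (hN : 0 < N) (a a1 a2 a3 u v : R2 N N)
    (ha : a ∈ MvPolynomial.supported ℂ (Kv N hN))
    (ha1 : a1 ∈ MvPolynomial.supported ℂ (Kv N hN))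
    (ha2 : a2 ∈ MvPolynomial.supported ℂ (Kv N hN))
    (ha3 : a3 ∈ MvPolynomial.supported ℂ (Kv N hN))
    (heq : a + ψ (iz N hN) * a1 + χ (iz N hN) * a2 + ψ (iz N hN) * χ (iz N hN) * a3
      = Pp N N * u + Qq N N * v) :
    a = 0 ∧ a1 = 0 ∧ a2 = 0 ∧ a3 = 0 := by
  rw [MvPolynomial.supported_eq_range_rename, AlgHom.mem_range] at ha ha1 ha2 ha3
  obtain ⟨ta, rfl⟩ := ha
  obtain ⟨ta1, rfl⟩ := ha1
  obtain ⟨ta2, rfl⟩ := ha2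
  obtain ⟨ta3, rfl⟩ := ha3
  have hmp := mempR N hN
  have hmq := memqR N hN
  rw [MvPolynomial.supported_eq_range_rename, AlgHom.mem_range] at hmp hmq
  obtain ⟨tp, htp⟩ := hmp
  obtain ⟨tq, htq⟩ := hmq
  -- the AdjoinRoot tower
  set f : Polynomial (MvPolynomial (Kv N hN) ℂ) := Polynomial.X^2 + Polynomial.C tp with hf
  set g : Polynomial (AdjoinRoot f) :=
    Polynomial.X^2 + Polynomial.C ((AdjoinRoot.of f) tq) with hg
  set ι : MvPolynomial (Kv N hN) ℂ →+* AdjoinRoot g := (AdjoinRoot.of g).comp (AdjoinRoot.of f) with hι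
  classical
  set ev : (Fin N ⊕ Fin N) → AdjoinRoot g := fun w =>
    if h1 : w = Sum.inl (iz N hN) then (AdjoinRoot.of g) (AdjoinRoot.root f)
    else if h2 : w = Sum.inr (iz N hN) then AdjoinRoot.root g
    else ι (X (⟨w, h1, h2⟩ : Kv N hN)) with hev
  set φ : R2 N N →+* AdjoinRoot g :=
    MvPolynomial.eval₂Hom (ι.comp (C : ℂ →+* MvPolynomial (Kv N hN) ℂ)) ev with hφ
  have hren : ∀ b : MvPolynomial (Kv N hN) ℂ, φ (rename Subtype.val b) = ι b := by
    intro b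
    rw [hφ, coe_eval₂Hom, eval₂_rename]
    have hevv : (ev ∘ Subtype.val) = fun k : Kv N hN => ι (X k) := by
      funext k
      simp only [Function.comp, hev]
      rw [dif_neg k.2.1, dif_neg k.2.2]
    rw [hevv]
    conv_rhs => rw [show b = eval₂ C X b from (eval₂_eta b).symm]
    rw [eval₂_comp_left ι C X b]
    rfl
  have hφψ : φ (ψ (iz N hN)) = (AdjoinRoot.of g) (AdjoinRoot.root f) := by
    rw [hφ, ψ, eval₂Hom_X', hev]
    simp
  have hφχ : φ (χ (iz N hN)) = AdjoinRoot.root g := by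
    rw [hφ, χ, eval₂Hom_X', hev]
    simp
  have hrootf : (AdjoinRoot.root f)^2 + (AdjoinRoot.of f) tp = 0 := by
    rw [← AdjoinRoot.mk_X, ← AdjoinRoot.mk_C, ← map_pow, ← map_add, ← hf]
    exact AdjoinRoot.mk_self
  have hrootg : (AdjoinRoot.root g)^2 + ι tq = 0 := by
    rw [hι, RingHom.comp_apply, ← AdjoinRoot.mk_X, ← AdjoinRoot.mk_C, ← map_pow, ← map_add,
      ← hg]
    exact AdjoinRoot.mk_self
  have hφP : φ (Pp N N) = 0 := by
    rw [hPsplit N hN, map_add, map_pow, hφψ, ← htp, hren, hι, RingHom.comp_apply,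
      ← map_pow, ← map_add, hrootf, map_zero]
  have hφQ : φ (Qq N N) = 0 := by
    rw [hQsplit N hN, map_add, map_pow, hφχ, ← htq, hren, hrootg]
  have happ := congrArg φ heq
  simp only [map_add, map_mul, hφψ, hφχ, hφP, hφQ, hren, zero_mul, add_zero] at happ
  -- regroup
  have hgrp : (AdjoinRoot.of g) ((AdjoinRoot.of f) ta + (AdjoinRoot.of f) ta1 * AdjoinRoot.root f)
      + (AdjoinRoot.of g) ((AdjoinRoot.of f) ta2 + (AdjoinRoot.of f) ta3 * AdjoinRoot.root f)
        * AdjoinRoot.root g = 0 := by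
    simp only [map_add, map_mul]
    rw [hι] at happ
    simp only [RingHom.comp_apply] at happ
    linear_combination happ
  haveI : Nontrivial (AdjoinRoot f) := quad_nontrivial tp
  obtain ⟨hc0, hc1⟩ := quad_helper _ _ _ hgrp
  obtain ⟨h00, h01⟩ := quad_helper _ _ _ hc0
  obtain ⟨h10, h11⟩ := quad_helper _ _ _ hc1
  exact ⟨by rw [h00, map_zero], by rw [h01, map_zero],
    by rw [h10, map_zero], by rw [h11, map_zero]⟩

end Stmt5aux

/-- for `N ≥ 1` and any invertible `S` (equivalent spinor
representation of the Euclidean D = 2 case), (i) `dω = 0` iff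
`ω ∼ a + Σ_α ξ₁^α a_α + (Σ_{α,β} ξ₁^α ξ₁^β (ΓC⁻¹)_{αβ}) b` with coefficients in
`ℂ[ψ₂,…,ψ_N, χ₂,…,χ_N]`; (ii) such a combination is `∼ 0` iff
`a = a₁ = a₂ = b = 0`. -/
theorem stmt5 (N : ℕ) (hN : 0 < N)
    (S : Matrix (Fin 2) (Fin 2) ℂ) (hS : IsUnit S.det) :
    (∀ ω : Om2 N N, d2 ω = 0 ↔
      ∃ a ∈ coefRingN N hN,
      ∃ aa : Fin 2 → R2 N N, (∀ α, aa α ∈ coefRingN N hN) ∧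
      ∃ b ∈ coefRingN N hN,
        Equiv2 ω (ofR (a + (∑ α, xi S ⟨0, hN⟩ α * aa α)
          + (∑ α, ∑ β, xi S ⟨0, hN⟩ α * xi S ⟨0, hN⟩ β
              * C ((Gam S * (Cmat S)⁻¹) α β)) * b)))
    ∧
    (∀ (a : R2 N N) (aa : Fin 2 → R2 N N) (b : R2 N N),
      a ∈ coefRingN N hN → (∀ α, aa α ∈ coefRingN N hN) → b ∈ coefRingN N hN →
      (Equiv2 (ofR (a + (∑ α, xi S ⟨0, hN⟩ α * aa α)
          + (∑ α, ∑ β, xi S ⟨0, hN⟩ α * xi S ⟨0, hN⟩ β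
              * C ((Gam S * (Cmat S)⁻¹) α β)) * b)) 0 ↔
        (a = 0 ∧ aa 0 = 0 ∧ aa 1 = 0 ∧ b = 0))) := by
  classical
  have hcoef : coefRingN N hN = MvPolynomial.supported ℂ (Stmt5aux.Kv N hN) := rfl
  have hi0 : (⟨0, hN⟩ : Fin N) = Stmt5aux.iz N hN := rfl
  have hch : (C (-2*Complex.I) * C (Complex.I/2) : R2 N N) = 1 := by
    rw [← map_mul, show (-2*Complex.I) * (Complex.I/2) = 1 by
      linear_combination -(Complex.I_sq), map_one]
  constructor
  · intro ω
    constructor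
    · -- cocycle → normal form
      intro hd
      have h3 : ω 3 = 0 := by
        have h := congrFun hd 1
        simp only [d2, vec4_1, Pi.zero_apply, neg_eq_zero] at h
        rcases mul_eq_zero.mp h with h | h
        · exact absurd h (Stmt5aux.Qq_ne_zero N hN)
        · exact h
      have h0 : Pp N N * ω 1 + Qq N N * ω 2 = 0 := by
        have h := congrFun hd 0
        simpa only [d2, vec4_0, Pi.zero_apply] using h
      obtain ⟨t, ht1, ht2⟩ := Stmt5aux.L3 N hN (ω 1) (ω 2) h0
      obtain ⟨a, a1, a2, a3, u, v, m0, m1, m2, m3, he⟩ := Stmt5aux.L1 N hN (ω 0)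
      refine ⟨a, by rw [hcoef]; exact m0,
        fun α => C (S α 0) * a1 + C (S α 1) * a2,
        fun α => by
          rw [hcoef]
          exact add_mem (mul_mem (Stmt5aux.memC N hN _) m1)
            (mul_mem (Stmt5aux.memC N hN _) m2),
        C (Complex.I/2) * a3,
        by rw [hcoef]; exact mul_mem (Stmt5aux.memC N hN _) m3, ?_⟩
      have hr : a + (∑ α, xi S ⟨0, hN⟩ α * (C (S α 0) * a1 + C (S α 1) * a2))
          + (∑ α, ∑ β, xi S ⟨0, hN⟩ α * xi S ⟨0, hN⟩ β
              * C ((Gam S * (Cmat S)⁻¹) α β)) * (C (Complex.I/2) * a3)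
          = a + ψ (Stmt5aux.iz N hN) * a1 + χ (Stmt5aux.iz N hN) * a2
            + ψ (Stmt5aux.iz N hN) * χ (Stmt5aux.iz N hN) * a3 := by
        obtain ⟨hrec1, hrec2⟩ := recov2 S hS a1 a2
        rw [quadxi S hS]
        simp only [Fin.sum_univ_two, xi, hi0]
        linear_combination (ψ (Stmt5aux.iz N hN)) * hrec1 + (χ (Stmt5aux.iz N hN)) * hrec2
          + (ψ (Stmt5aux.iz N hN) * χ (Stmt5aux.iz N hN) * a3) * hch
      refine ⟨![0, u, v, -t], ?_⟩
      funext i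
      fin_cases i
      · show ω 0 - _ = Pp N N * ![0, u, v, -t] 1 + Qq N N * ![0, u, v, -t] 2
        rw [vec4_1, vec4_2, hr]
        show ω 0 - (a + ψ (Stmt5aux.iz N hN) * a1 + χ (Stmt5aux.iz N hN) * a2
          + ψ (Stmt5aux.iz N hN) * χ (Stmt5aux.iz N hN) * a3) = Pp N N * u + Qq N N * v
        linear_combination he
      · show ω 1 - 0 = -(Qq N N * ![0, u, v, -t] 3)
        rw [vec4_3]
        linear_combination ht1
      · show ω 2 - 0 = Pp N N * ![0, u, v, -t] 3
        rw [vec4_3]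
        linear_combination ht2
      · show ω 3 - 0 = 0
        rw [h3, sub_zero]
    · -- normal form → cocycle
      rintro ⟨a, -, aa, -, b, -, ρ, hρ⟩
      have hω : ω = d2 ρ + ofR (a + (∑ α, xi S ⟨0, hN⟩ α * aa α)
          + (∑ α, ∑ β, xi S ⟨0, hN⟩ α * xi S ⟨0, hN⟩ β
              * C ((Gam S * (Cmat S)⁻¹) α β)) * b) := sub_eq_iff_eq_add.mp hρ
      funext i
      fin_cases i
      · show Pp N N * ω 1 + Qq N N * ω 2 = 0
        have h1 : ω 1 = -(Qq N N * ρ 3) := by rw [hω]; simp [d2, ofR]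
        have h2 : ω 2 = Pp N N * ρ 3 := by rw [hω]; simp [d2, ofR]
        rw [h1, h2]
        ring
      · show -(Qq N N * ω 3) = 0
        have h3 : ω 3 = 0 := by rw [hω]; simp [d2, ofR]
        rw [h3, mul_zero, neg_zero]
      · show Pp N N * ω 3 = 0
        have h3 : ω 3 = 0 := by rw [hω]; simp [d2, ofR]
        rw [h3, mul_zero]
      · rfl
  · -- part (ii)
    intro a aa b ma maa mb
    constructor
    · rintro ⟨ρ, hρ⟩
      have hρ0 : a + (∑ α, xi S ⟨0, hN⟩ α * aa α)
          + (∑ α, ∑ β, xi S ⟨0, hN⟩ α * xi S ⟨0, hN⟩ β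
              * C ((Gam S * (Cmat S)⁻¹) α β)) * b
          = Pp N N * ρ 1 + Qq N N * ρ 2 := by
        have h := congrFun hρ 0
        simpa only [Pi.sub_apply, Pi.zero_apply, sub_zero, d2, ofR, vec4_0] using h
      have hr2 : a + (∑ α, xi S ⟨0, hN⟩ α * aa α)
          + (∑ α, ∑ β, xi S ⟨0, hN⟩ α * xi S ⟨0, hN⟩ β
              * C ((Gam S * (Cmat S)⁻¹) α β)) * b
          = a + ψ (Stmt5aux.iz N hN) * (C (S⁻¹ 0 0) * aa 0 + C (S⁻¹ 0 1) * aa 1)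
            + χ (Stmt5aux.iz N hN) * (C (S⁻¹ 1 0) * aa 0 + C (S⁻¹ 1 1) * aa 1)
            + ψ (Stmt5aux.iz N hN) * χ (Stmt5aux.iz N hN) * (C (-2*Complex.I) * b) := by
        rw [quadxi S hS, linxi S]
        rw [hi0]
        ring
      rw [hr2] at hρ0
      rw [hcoef] at ma mb
      have maa' : ∀ α, aa α ∈ MvPolynomial.supported ℂ (Stmt5aux.Kv N hN) := by
        intro α
        have := maa α
        rwa [hcoef] at this
      obtain ⟨h00, h01, h10, h11⟩ := Stmt5aux.L2 N hN a _ _ (C (-2*Complex.I) * b) (ρ 1) (ρ 2)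
        ma
        (add_mem (mul_mem (Stmt5aux.memC N hN _) (maa' 0))
          (mul_mem (Stmt5aux.memC N hN _) (maa' 1)))
        (add_mem (mul_mem (Stmt5aux.memC N hN _) (maa' 0))
          (mul_mem (Stmt5aux.memC N hN _) (maa' 1)))
        (mul_mem (Stmt5aux.memC N hN _) mb)
        hρ0
      have hb : b = 0 := by
        rcases mul_eq_zero.mp h11 with h | h
        · exfalso
          rw [MvPolynomial.C_eq_zero] at h
          exact Complex.I_ne_zero (by linear_combination (-1/2 : ℂ) * h)
        · exact h
      have haa : ∀ α, aa α = 0 := by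
        intro α
        have hrc := recov S hS aa α
        rw [h01, h10, mul_zero, mul_zero, add_zero] at hrc
        exact hrc.symm
      exact ⟨h00, haa 0, haa 1, hb⟩
    · rintro ⟨rfl, h0, h1, rfl⟩
      refine ⟨0, ?_⟩
      have hr0 : (0 : R2 N N) + (∑ α, xi S ⟨0, hN⟩ α * aa α)
          + (∑ α, ∑ β, xi S ⟨0, hN⟩ α * xi S ⟨0, hN⟩ β
              * C ((Gam S * (Cmat S)⁻¹) α β)) * 0 = 0 := by
        simp [Fin.sum_univ_two, h0, h1]
      rw [hr0]
      funext i
      fin_cases i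
      · show (0:R2 N N) - 0 = Pp N N * (0:R2 N N) + Qq N N * (0:R2 N N)
        simp
      · show (0:R2 N N) - 0 = -(Qq N N * (0:R2 N N))
        simp
      · show (0:R2 N N) - 0 = Pp N N * (0:R2 N N)
        simp
      · show (0:R2 N N) - 0 = (0:R2 N N)
        simp
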